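/- Let f, f', g, g' be EC loops in a digital image (X,κ) at a common basepoint such that f is EC homotopic to f' and g is EC homotopic to g', with both homotopies holding the endpoints fixed. Then f * g is EC homotopic to f' * g' holding the endpoints fixed. -/

import Mathlib

/-- 2-adjacency (c₁-adjacency) on the natural numbers / digital intervals. -/
def natAdj (a b : ℕ) : Prop := b = a + 1 ∨ a = b + 1

/-- Digital `(κ,μ)`-continuity of a function between digital images. -/
def DigCont {X Y : Type*} (κ : X → X → Prop) (μ : Y → Y → Prop) (f : X → Y) : Prop :=
  ∀ a b, κ a b → f a = f b ∨ μ (f a) (f b)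

/-- `(2,κ)`-continuity for functions on `ℕ* = {0,1,2,…}` with 2-adjacency. -/
def ECCont {X : Type*} (κ : X → X → Prop) (f : ℕ → X) : Prop :=
  ∀ a b, natAdj a b → f a = f b ∨ κ (f a) (f b)

/-- An eventually constant (EC) path in `(X,κ)`. -/
def IsECPath {X : Type*} (κ : X → X → Prop) (f : ℕ → X) : Prop :=
  ECCont κ f ∧ ∃ N, ∀ n, N ≤ n → f n = f N

/-- `N_f`, the least index after which `f` is constant. -/
noncomputable def ecN {X : Type*} (f : ℕ → X) : ℕ :=
  sInf {m | ∀ n, m ≤ n → f n = f m}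

/-- An EC homotopy from `f` to `g` (each stage is an EC path). -/
def IsECHomotopy {X : Type*} (κ : X → X → Prop) (f g : ℕ → X) (k : ℕ)
    (H : ℕ → ℕ → X) : Prop :=
  (∀ n, H n 0 = f n) ∧ (∀ n, H n k = g n) ∧
  (∀ n s t, s ≤ k → t ≤ k → natAdj s t → H n s = H n t ∨ κ (H n s) (H n t)) ∧
  (∀ t, t ≤ k → IsECPath κ (fun n => H n t))

/-- The EC homotopy `H` from `f` to `g` holds the endpoints fixed. -/
def ECHoldsEnds {X : Type*} (f g : ℕ → X) (k : ℕ) (H : ℕ → ℕ → X) : Prop :=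
  f 0 = g 0 ∧ (∀ t, t ≤ k → H 0 t = f 0) ∧
  ∃ c, ∀ n, c ≤ n → f n = g n ∧ ∀ t, t ≤ k → H n t = f n

/-- `f` and `g` are EC homotopic. -/
def ECHomotopic {X : Type*} (κ : X → X → Prop) (f g : ℕ → X) : Prop :=
  ∃ k H, IsECHomotopy κ f g k H

/-- `f` and `g` are EC homotopic holding the endpoints fixed. -/
def ECHomotopicFix {X : Type*} (κ : X → X → Prop) (f g : ℕ → X) : Prop :=
  ∃ k H, IsECHomotopy κ f g k H ∧ ECHoldsEnds f g k H

/-- The product `f * g` of EC loops. -/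
noncomputable def ecStar {X : Type*} (f g : ℕ → X) : ℕ → X :=
  fun n => if n ≤ ecN f then f n else g (n - ecN f)

/-- An EC loop based at `x₀`: an EC path with `f(0) = f(∞) = x₀`. -/
def IsECLoop {X : Type*} (κ : X → X → Prop) (x₀ : X) (f : ℕ → X) : Prop :=
  IsECPath κ f ∧ f 0 = x₀ ∧ ∃ N, ∀ n, N ≤ n → f n = x₀

section Aux

variable {X : Type*} {κ : X → X → Prop} {x₀ : X}

/-- Build `ECCont` from successor steps, using symmetry of `κ`. -/
lemma ecCont_of_succ (hκ : Symmetric κ) {f : ℕ → X}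
    (h : ∀ a, f a = f (a + 1) ∨ κ (f a) (f (a + 1))) : ECCont κ f := by
  intro a b hab
  rcases hab with rfl | rfl
  · exact h a
  · rcases h b with he | hk
    · exact Or.inl he.symm
    · exact Or.inr (hκ hk)

/-- Build the `t`-adjacency condition of a homotopy from successor steps. -/
lemma adjSteps (hκ : Symmetric κ) {k : ℕ} {H : ℕ → ℕ → X}
    (h : ∀ n s, s + 1 ≤ k → H n s = H n (s + 1) ∨ κ (H n s) (H n (s + 1))) :
    ∀ n s t, s ≤ k → t ≤ k → natAdj s t → H n s = H n t ∨ κ (H n s) (H n t) := by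
  intro n s t hs ht hadj
  rcases hadj with rfl | rfl
  · exact h n s ht
  · rcases h n t hs with he | hk
    · exact Or.inl he.symm
    · exact Or.inr (hκ hk)

lemma ecN_spec {f : ℕ → X} (h : ∃ N, ∀ n, N ≤ n → f n = f N) :
    ∀ n, ecN f ≤ n → f n = f (ecN f) := by
  have hne : ({m | ∀ n, m ≤ n → f n = f m} : Set ℕ).Nonempty :=
    ⟨h.choose, h.choose_spec⟩
  exact Nat.sInf_mem hne

lemma loop_ecN_eq (hf : IsECLoop κ x₀ f) : ∀ n, ecN f ≤ n → f n = x₀ := by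
  obtain ⟨⟨hc, hN⟩, h0, N, hx⟩ := hf
  have hs := ecN_spec hN
  intro n hn
  have h1 : f (max n N) = f (ecN f) := hs _ (le_trans hn (le_max_left _ _))
  have h2 : f (max n N) = x₀ := hx _ (le_max_right _ _)
  rw [hs n hn, ← h1, h2]

/-- Concatenation of `f` and `g` at position `M`. -/
noncomputable def ecP (M : ℕ) (f g : ℕ → X) : ℕ → X :=
  fun n => if n ≤ M then f n else g (n - M)

lemma ecStar_eq_ecP (f g : ℕ → X) : ecStar f g = ecP (ecN f) f g := rfl

lemma ecP_cont (hκ : Symmetric κ) {f g : ℕ → X} {M : ℕ}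
    (hf : ECCont κ f) (hg : ECCont κ g) (hb : f M = g 0) :
    ECCont κ (ecP M f g) := by
  apply ecCont_of_succ hκ
  intro a
  by_cases h1 : a + 1 ≤ M
  · simp only [ecP, if_pos (le_trans (Nat.le_succ a) h1), if_pos h1]
    exact hf a (a + 1) (Or.inl rfl)
  · by_cases h2 : a ≤ M
    · have ha : a = M := by omega
      subst ha
      simp only [ecP, if_pos le_rfl, if_neg h1]
      have he : a + 1 - a = 1 := by omega
      rw [he, hb]
      exact hg 0 1 (Or.inl rfl)
    · simp only [ecP, if_neg h2, if_neg h1]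
      have he : a + 1 - M = (a - M) + 1 := by omega
      rw [he]
      exact hg (a - M) (a - M + 1) (Or.inl rfl)

/-- Padding homotopy: moving the concatenation point further right. -/
lemma ecP_pad (hκ : Symmetric κ) {f g : ℕ → X} {M M' : ℕ} (hMM : M ≤ M')
    (hfc : ECCont κ f) (hgc : ECCont κ g)
    (hfx : ∀ n, M ≤ n → f n = x₀) (hg0 : g 0 = x₀)
    (hgx : ∃ N, ∀ n, N ≤ n → g n = x₀) :
    ECHomotopicFix κ (ecP M f g) (ecP M' f g) := by
  obtain ⟨Ng, hNg⟩ := hgx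
  refine ⟨M' - M, fun n t => ecP (M + t) f g n, ⟨?_, ?_, ?_, ?_⟩, ?_, ?_, ?_⟩
  · intro n; rfl
  · intro n
    show ecP (M + (M' - M)) f g n = ecP M' f g n
    have : M + (M' - M) = M' := by omega
    rw [this]
  · apply adjSteps hκ
    intro n s hs
    by_cases h1 : n ≤ M + s
    · simp only [ecP, if_pos h1, if_pos (le_trans h1 (by omega : M + s ≤ M + (s+1)))]
      exact Or.inl trivial
    · by_cases h2 : n ≤ M + (s + 1)
      · have hn : n = M + s + 1 := by omega
        simp only [ecP, if_neg h1, if_pos h2]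
        have e1 : n - (M + s) = 1 := by omega
        have e2 : f n = g 0 := by
          rw [hfx n (by omega), ← hg0]
        rw [e1, e2]
        exact hgc 1 0 (Or.inr rfl)
      · simp only [ecP, if_neg h1, if_neg h2]
        have e1 : n - (M + s) = (n - (M + (s + 1))) + 1 := by omega
        rw [e1]
        exact hgc _ _ (Or.inr rfl)
  · intro t ht
    constructor
    · apply ecP_cont hκ hfc hgc
      rw [hfx (M + t) (by omega), ← hg0]
    · refine ⟨M + t + Ng + 1, fun n hn => ?_⟩
      simp only [ecP, if_neg (by omega : ¬ n ≤ M + t),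
        if_neg (by omega : ¬ M + t + Ng + 1 ≤ M + t)]
      rw [hNg _ (by omega), hNg _ (by omega)]
  · simp only [ecP, if_pos (Nat.zero_le M), if_pos (Nat.zero_le M')]
  · intro t ht
    simp only [ecP, if_pos (Nat.zero_le (M + t)), if_pos (Nat.zero_le M)]
  · refine ⟨M' + Ng + 1, fun n hn => ?_⟩
    have h1 : ecP M f g n = x₀ := by
      simp only [ecP, if_neg (by omega : ¬ n ≤ M)]
      exact hNg _ (by omega)
    have h2 : ecP M' f g n = x₀ := by
      simp only [ecP, if_neg (by omega : ¬ n ≤ M')]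
      exact hNg _ (by omega)
    refine ⟨h1.trans h2.symm, fun t ht => ?_⟩
    have h3 : ecP (M + t) f g n = x₀ := by
      simp only [ecP, if_neg (by omega : ¬ n ≤ M + t)]
      exact hNg _ (by omega)
    show ecP (M + t) f g n = ecP M f g n
    rw [h3, h1]

end Aux
section Aux2

variable {X : Type*} {κ : X → X → Prop} {x₀ : X}

/-- Replacing both halves of a concatenation via homotopies. -/
lemma ecP_mid (hκ : Symmetric κ) {f f' g g' : ℕ → X} {k1 k2 M c1 c2 : ℕ}
    {H1 H2 : ℕ → ℕ → X}
    (hH1 : IsECHomotopy κ f f' k1 H1) (hH2 : IsECHomotopy κ g g' k2 H2)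
    (hc1 : ∀ n, c1 ≤ n → f n = f' n ∧ ∀ t, t ≤ k1 → H1 n t = f n)
    (hc2 : ∀ n, c2 ≤ n → g n = g' n ∧ ∀ t, t ≤ k2 → H2 n t = g n)
    (hg0 : ∀ t, t ≤ k2 → H2 0 t = x₀)
    (h10 : ∀ t, t ≤ k1 → H1 0 t = f 0)
    (hff' : f 0 = f' 0)
    (hfM : ∀ n, M ≤ n → f n = x₀) (hM1 : c1 ≤ M)
    (hgx : ∃ N, ∀ n, N ≤ n → g n = x₀) :
    ECHomotopicFix κ (ecP M f g) (ecP M f' g') := by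
  obtain ⟨h10', h1k, h1adj, h1st⟩ := hH1
  obtain ⟨h20', h2k, h2adj, h2st⟩ := hH2
  obtain ⟨Ng, hNg⟩ := hgx
  set k := max k1 k2 with hk
  refine ⟨k, fun n t => if n ≤ M then H1 n (min t k1) else H2 (n - M) (min t k2),
    ⟨?_, ?_, ?_, ?_⟩, ?_, ?_, ?_⟩
  · intro n
    simp only [Nat.min_eq_left (Nat.zero_le k1), Nat.min_eq_left (Nat.zero_le k2)]
    simp only [ecP, h10', h20']
  · intro n
    simp only [(show min k k1 = k1 by omega), (show min k k2 = k2 by omega),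
      h1k, h2k, ecP]
  · apply adjSteps hκ
    intro n s hs
    by_cases hn : n ≤ M
    · simp only [if_pos hn]
      by_cases hsk : s + 1 ≤ k1
      · rw [Nat.min_eq_left (by omega), Nat.min_eq_left hsk]
        exact h1adj n s (s + 1) (by omega) hsk (Or.inl rfl)
      · rw [Nat.min_eq_right (by omega), Nat.min_eq_right (by omega)]
        exact Or.inl rfl
    · simp only [if_neg hn]
      by_cases hsk : s + 1 ≤ k2
      · rw [Nat.min_eq_left (by omega), Nat.min_eq_left hsk]
        exact h2adj (n - M) s (s + 1) (by omega) hsk (Or.inl rfl)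
      · rw [Nat.min_eq_right (by omega), Nat.min_eq_right (by omega)]
        exact Or.inl rfl
  · intro t ht
    have ht1 : min t k1 ≤ k1 := Nat.min_le_right _ _
    have ht2 : min t k2 ≤ k2 := Nat.min_le_right _ _
    have hstage : (fun n => if n ≤ M then H1 n (min t k1) else H2 (n - M) (min t k2)) =
        ecP M (fun n => H1 n (min t k1)) (fun n => H2 n (min t k2)) := rfl
    rw [hstage]
    constructor
    · apply ecP_cont hκ (h1st _ ht1).1 (h2st _ ht2).1
      rw [(hc1 M hM1).2 _ ht1, hfM M le_rfl, hg0 _ ht2]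
    · refine ⟨M + max c2 Ng + 1, fun n hn => ?_⟩
      simp only [ecP, if_neg (by omega : ¬ n ≤ M),
        if_neg (by omega : ¬ M + max c2 Ng + 1 ≤ M)]
      rw [(hc2 (n - M) (by omega)).2 _ ht2, hNg _ (by omega),
        (hc2 (M + max c2 Ng + 1 - M) (by omega)).2 _ ht2, hNg _ (by omega)]
  · simp only [ecP, if_pos (Nat.zero_le M), hff']
  · intro t ht
    simp only [if_pos (Nat.zero_le M), ecP]
    exact h10 _ (Nat.min_le_right _ _)
  · refine ⟨M + max c2 Ng + 1, fun n hn => ?_⟩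
    have hnM : ¬ n ≤ M := by omega
    have hcn : c2 ≤ n - M := by omega
    constructor
    · simp only [ecP, if_neg hnM]
      exact (hc2 _ hcn).1
    · intro t ht
      simp only [ecP, if_neg hnM]
      exact (hc2 _ hcn).2 _ (Nat.min_le_right _ _)

/-- Transitivity of `ECHomotopicFix`. -/
lemma ecHomotopicFix_trans {f g h : ℕ → X}
    (h1 : ECHomotopicFix κ f g) (h2 : ECHomotopicFix κ g h) :
    ECHomotopicFix κ f h := by
  obtain ⟨k1, H1, ⟨h10, h1k, h1adj, h1st⟩, e1fg, e1H0, c1, e1c⟩ := h1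
  obtain ⟨k2, H2, ⟨h20, h2k, h2adj, h2st⟩, e2fg, e2H0, c2, e2c⟩ := h2
  refine ⟨k1 + k2, fun n t => if t ≤ k1 then H1 n t else H2 n (t - k1),
    ⟨?_, ?_, ?_, ?_⟩, ?_, ?_, ?_⟩
  · intro n; simp only [if_pos (Nat.zero_le k1), h10]
  · intro n
    by_cases hk : k1 + k2 ≤ k1
    · have hk2 : k2 = 0 := by omega
      have e : k1 + k2 = k1 := by omega
      show (if k1 + k2 ≤ k1 then H1 n (k1 + k2) else H2 n (k1 + k2 - k1)) = h n
      rw [e, if_pos le_rfl, h1k, ← h2k n, hk2, h20]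
    · simp only [if_neg hk, Nat.add_sub_cancel_left, h2k]
  · intro n s t hs ht hadj
    rcases hadj with rfl | rfl
    · -- t = s + 1
      by_cases hs1 : s + 1 ≤ k1
      · simp only [if_pos (by omega : s ≤ k1), if_pos hs1]
        exact h1adj n s (s + 1) (by omega) hs1 (Or.inl rfl)
      · by_cases hs0 : s ≤ k1
        · have hsk : s = k1 := by omega
          subst hsk
          simp only [if_pos le_rfl, if_neg hs1]
          have e0 : s + 1 - s = 1 := by omega
          rw [e0, h1k, ← h20 n]
          exact h2adj n 0 1 (Nat.zero_le _) (by omega) (Or.inl rfl)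
        · simp only [if_neg hs0, if_neg hs1]
          have e0 : s + 1 - k1 = (s - k1) + 1 := by omega
          rw [e0]
          exact h2adj n (s - k1) (s - k1 + 1) (by omega) (by omega) (Or.inl rfl)
    · -- s = t + 1 : symmetric, reduce by cases
      by_cases ht1 : t + 1 ≤ k1
      · simp only [if_pos (by omega : t ≤ k1), if_pos ht1]
        exact h1adj n (t + 1) t ht1 (by omega) (Or.inr rfl)
      · by_cases ht0 : t ≤ k1
        · have htk : t = k1 := by omega
          subst htk
          simp only [if_pos le_rfl, if_neg ht1]
          have e0 : t + 1 - t = 1 := by omega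
          rw [e0, h1k, ← h20 n]
          exact h2adj n 1 0 (by omega) (Nat.zero_le _) (Or.inr rfl)
        · simp only [if_neg ht0, if_neg ht1]
          have e0 : t + 1 - k1 = (t - k1) + 1 := by omega
          rw [e0]
          exact h2adj n (t - k1 + 1) (t - k1) (by omega) (by omega) (Or.inr rfl)
  · intro t ht
    by_cases htk : t ≤ k1
    · simpa only [if_pos htk] using h1st t htk
    · simpa only [if_neg htk] using h2st (t - k1) (by omega)
  · exact e1fg.trans e2fg
  · intro t ht
    by_cases htk : t ≤ k1
    · simp only [if_pos htk]; exact e1H0 t htk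
    · simp only [if_neg htk]
      rw [e2H0 (t - k1) (by omega), ← e1fg]
  · refine ⟨max c1 c2, fun n hn => ?_⟩
    have hc1n := e1c n (le_trans (le_max_left _ _) hn)
    have hc2n := e2c n (le_trans (le_max_right _ _) hn)
    refine ⟨hc1n.1.trans hc2n.1, fun t ht => ?_⟩
    by_cases htk : t ≤ k1
    · simp only [if_pos htk]; exact hc1n.2 t htk
    · simp only [if_neg htk]
      rw [hc2n.2 (t - k1) (by omega), ← hc1n.1]

/-- Symmetry of `ECHomotopicFix`. -/
lemma ecHomotopicFix_symm (hκ : Symmetric κ) {f g : ℕ → X}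
    (h : ECHomotopicFix κ f g) : ECHomotopicFix κ g f := by
  obtain ⟨k, H, ⟨h0, hk, hadj, hst⟩, efg, eH0, c, ec⟩ := h
  refine ⟨k, fun n t => H n (k - t), ⟨?_, ?_, ?_, ?_⟩, ?_, ?_, ?_⟩
  · intro n; simp only [Nat.sub_zero, hk]
  · intro n; simp only [Nat.sub_self, h0]
  · apply adjSteps hκ
    intro n s hs
    exact hadj n (k - s) (k - (s + 1)) (by omega) (by omega) (Or.inr (by omega))
  · intro t ht; exact hst (k - t) (by omega)
  · exact efg.symm
  · intro t ht
    show H 0 (k - t) = g 0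
    rw [eH0 (k - t) (by omega), efg]
  · refine ⟨c, fun n hn => ?_⟩
    obtain ⟨hfg, hHt⟩ := ec n hn
    refine ⟨hfg.symm, fun t ht => ?_⟩
    show H n (k - t) = g n
    rw [hHt (k - t) (by omega), hfg]

end Aux2


/-- If `f ≃ f'` and `g ≃ g'` by EC homotopies holding the endpoints
fixed, then `f * g ≃ f' * g'` holding the endpoints fixed. -/
theorem ec_star_congr {X : Type*} (κ : X → X → Prop) (hκ : Symmetric κ)
    (x₀ : X) (f f' g g' : ℕ → X)
    (hf : IsECLoop κ x₀ f) (hf' : IsECLoop κ x₀ f')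
    (hg : IsECLoop κ x₀ g) (hg' : IsECLoop κ x₀ g')
    (h1 : ECHomotopicFix κ f f') (h2 : ECHomotopicFix κ g g') :
    ECHomotopicFix κ (ecStar f g) (ecStar f' g') := by
  obtain ⟨k1, H1, hH1, hE1⟩ := h1
  obtain ⟨k2, H2, hH2, hE2⟩ := h2
  obtain ⟨e1fg, e1H0, c1, e1c⟩ := hE1
  obtain ⟨e2fg, e2H0, c2, e2c⟩ := hE2
  set M := max (ecN f) (max (ecN f') c1) with hM
  have hfx : ∀ n, ecN f ≤ n → f n = x₀ := loop_ecN_eq hf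
  have hfx' : ∀ n, ecN f' ≤ n → f' n = x₀ := loop_ecN_eq hf'
  have hfc : ECCont κ f := hf.1.1
  have hgc : ECCont κ g := hg.1.1
  have hfc' : ECCont κ f' := hf'.1.1
  have hgc' : ECCont κ g' := hg'.1.1
  have hg0 : g 0 = x₀ := hg.2.1
  have hg0' : g' 0 = x₀ := hg'.2.1
  have hgx : ∃ N, ∀ n, N ≤ n → g n = x₀ := hg.2.2
  have hgx' : ∃ N, ∀ n, N ≤ n → g' n = x₀ := hg'.2.2
  rw [ecStar_eq_ecP, ecStar_eq_ecP]
  have step1 : ECHomotopicFix κ (ecP (ecN f) f g) (ecP M f g) :=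
    ecP_pad hκ (le_max_left _ _) hfc hgc hfx hg0 hgx
  have step2 : ECHomotopicFix κ (ecP M f g) (ecP M f' g') :=
    ecP_mid hκ hH1 hH2 e1c e2c
      (fun t ht => (e2H0 t ht).trans hg0)
      e1H0 e1fg
      (fun n hn => hfx n (le_trans (le_max_left _ _) hn))
      (le_trans (le_max_right _ _ : c1 ≤ max (ecN f') c1) (le_max_right _ _))
      hgx
  have step3 : ECHomotopicFix κ (ecP (ecN f') f' g') (ecP M f' g') :=
    ecP_pad hκ (le_trans (le_max_left _ _) (le_max_right _ _)) hfc' hgc' hfx' hg0' hgx'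
  exact ecHomotopicFix_trans (ecHomotopicFix_trans step1 step2) (ecHomotopicFix_symm hκ step3)
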